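/- For all k ≥ 1 and all n with 0 ≤ n ≤ 2^(2k-1) − 1, s(n + 2^(2k)) = s(n) + 2^k. -/
import Mathlib

def rs : ℕ → ℤ
  | 0 => 1
  | (n+1) =>
    if (n+1) % 2 = 0 then rs ((n+1)/2)
    else (-1)^((n+1)/2) * rs ((n+1)/2)
decreasing_by all_goals exact Nat.div_lt_self (Nat.succ_pos n) (by norm_num)

def s (n : ℕ) : ℤ := ∑ i ∈ Finset.range (n+1), rs i

def t (n : ℕ) : ℤ := ∑ i ∈ Finset.range (n+1), (-1)^i * rs i

lemma rs_even (n : ℕ) : rs (2*n) = rs n := by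
  match n with
  | 0 => rfl
  | m+1 =>
    show rs (2*m+1+1) = rs (m+1)
    rw [rs]
    have h1 : (2*m+1+1) % 2 = 0 := by omega
    have h2 : (2*m+1+1)/2 = m+1 := by omega
    simp [h1, h2]

lemma rs_odd (n : ℕ) : rs (2*n+1) = (-1)^n * rs n := by
  show rs (2*n+1) = (-1)^n * rs n
  rw [show 2*n+1 = (2*n)+1 from rfl, rs]
  have h1 : (2*n+1) % 2 ≠ 0 := by omega
  have h2 : (2*n+1)/2 = n := by omega
  simp [h1, h2]

lemma st_rec (n : ℕ) : s (2*n+1) = s n + t n ∧ t (2*n+1) = s n - t n := by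
  induction n with
  | zero =>
    have h0 : rs 0 = 1 := by simp [rs]
    have h1 : rs 1 = 1 := by rw [show (1:ℕ) = 2*0+1 from rfl, rs_odd]; simp [h0]
    constructor <;> simp [s, t, Finset.sum_range_succ, h0, h1]
  | succ m ih =>
    have hA : rs (2*m+2) = rs (m+1) := by
      simpa [show 2*(m+1) = 2*m+2 by ring] using rs_even (m+1)
    have hB : rs (2*m+3) = (-1)^(m+1) * rs (m+1) := by
      simpa [show 2*(m+1)+1 = 2*m+3 by ring] using rs_odd (m+1)
    have p1 : ((-1:ℤ))^(2*m+2) = 1 := Even.neg_one_pow ⟨m+1, by ring⟩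
    have p2 : ((-1:ℤ))^(2*m+3) = -1 := Odd.neg_one_pow ⟨m+1, by ring⟩
    have hs : s (2*(m+1)+1) = s (2*m+1) + rs (2*m+2) + rs (2*m+3) := by
      simp only [s, show 2*(m+1)+1+1 = (2*m+1+1)+1+1 by ring, Finset.sum_range_succ]
    have ht : t (2*(m+1)+1) = t (2*m+1) + (-1)^(2*m+2) * rs (2*m+2)
        + (-1)^(2*m+3) * rs (2*m+3) := by
      simp only [t, show 2*(m+1)+1+1 = (2*m+1+1)+1+1 by ring, Finset.sum_range_succ]
    have hsm : s (m+1) = s m + rs (m+1) := by simp [s, Finset.sum_range_succ]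
    have htm : t (m+1) = t m + (-1)^(m+1) * rs (m+1) := by
      simp [t, Finset.sum_range_succ]
    rw [hs, ht, hsm, htm, ih.1, ih.2, hA, hB, p1, p2]
    constructor <;> ring

lemma st_pow (k : ℕ) : s (2^(2*k) - 1) = 2^k ∧ t (2^(2*k) - 1) = 2^k := by
  induction k with
  | zero => simpa using ⟨by simp [s, rs], by simp [t, rs]⟩
  | succ k ih =>
    have e1 : 2^(2*k+1) - 1 = 2*(2^(2*k) - 1) + 1 := by
      have : 1 ≤ 2^(2*k) := Nat.one_le_two_pow
      omega
    have e2 : 2^(2*(k+1)) - 1 = 2*(2^(2*k+1) - 1) + 1 := by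
      have : 1 ≤ 2^(2*k+1) := Nat.one_le_two_pow
      have : 2^(2*(k+1)) = 2 * 2^(2*k+1) := by ring
      omega
    have h1 := st_rec (2^(2*k) - 1)
    have h2 := st_rec (2^(2*k+1) - 1)
    rw [e2, h2.1, h2.2, e1, h1.1, h1.2, ih.1, ih.2]
    constructor <;> ring

lemma rs_shift : ∀ m : ℕ, ∀ i : ℕ, i < 2^m → rs (i + 2^(m+1)) = rs i := by
  intro m
  induction m with
  | zero =>
    intro i hi
    interval_cases i
    show rs 2 = rs 0
    rw [show (2:ℕ) = 2*1 from rfl, rs_even, show (1:ℕ) = 2*0+1 from rfl, rs_odd]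
    simp
  | succ m ih =>
    intro i hi
    rcases Nat.even_or_odd i with ⟨j, hj⟩ | ⟨j, hj⟩
    · have e : i + 2^(m+2) = 2*(j + 2^(m+1)) := by subst hj; ring
      rw [e, rs_even, ih j (by omega), hj, show j+j = 2*j by ring, rs_even]
    · have e : i + 2^(m+2) = 2*(j + 2^(m+1)) + 1 := by subst hj; ring
      have hp : ((-1:ℤ))^(j + 2^(m+1)) = (-1)^j := by
        rw [pow_add]
        have : Even (2^(m+1)) := ⟨2^m, by ring⟩
        rw [this.neg_one_pow, mul_one]
      rw [e, rs_odd, hp, ih j (by omega), hj, rs_odd]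

theorem stmt7 : ∀ k : ℕ, 1 ≤ k → ∀ n : ℕ, n ≤ 2^(2*k-1) - 1 →
    s (n + 2^(2*k)) = s n + 2^k := by
  intro k hk n hn
  have hm : 2*k = (2*k-1) + 1 := by omega
  have hsplit : s (n + 2^(2*k)) =
      (∑ i ∈ Finset.range (2^(2*k)), rs i) + ∑ i ∈ Finset.range (n+1), rs (2^(2*k) + i) := by
    rw [s, show n + 2^(2*k) + 1 = 2^(2*k) + (n+1) by ring, Finset.sum_range_add]
  have hP : 1 ≤ 2^(2*k-1) := Nat.one_le_two_pow
  have hshift : ∀ i ∈ Finset.range (n+1), rs (2^(2*k) + i) = rs i := by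
    intro i hi
    simp only [Finset.mem_range] at hi
    rw [Nat.add_comm, hm]
    exact rs_shift (2*k-1) i (by omega)
  have h1 : (∑ i ∈ Finset.range (2^(2*k)), rs i) = s (2^(2*k) - 1) := by
    rw [s]
    congr 1
    have : 1 ≤ 2^(2*k) := Nat.one_le_two_pow
    rw [show 2^(2*k) - 1 + 1 = 2^(2*k) by omega]
  rw [hsplit, Finset.sum_congr rfl hshift, h1, (st_pow k).1, ← s]
  ring
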